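/- Let α ∈ (0,1) be irrational, m ≥ 1, n ≥ 2 integers, and x ∈ ℝ/ℤ. The Sturmian word of slope α and intercept x begins with an abelian power of period m and exponent n if and only if the n points x, x + mα, …, x + (n−1)mα (mod 1) all lie in the arc I(0, {−mα}) or all lie in the arc I({−mα}, 1) of the circle. -/

import Mathlib

/-- The `n`-th letter of the Sturmian word of slope `α` and intercept `x`:
`s(n) = ⌊(n+1)α + x⌋ − ⌊nα + x⌋`. -/
noncomputable def sturmianLetter (α x : ℝ) (n : ℕ) : ℤ :=
  ⌊((n : ℝ) + 1) * α + x⌋ - ⌊(n : ℝ) * α + x⌋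

/-- The `j`-th block of length `m` of the Sturmian word of slope `α` and intercept `x`,
i.e. its factor of length `m` starting at position `j·m`. -/
noncomputable def sturmianBlock (α x : ℝ) (m j : ℕ) : List ℤ :=
  (List.range m).map (fun i => sturmianLetter α x (j * m + i))

/-- Abelian equivalence of words over `{0,1} ⊆ ℤ`: equal numbers of `0`s and of `1`s. -/
def AbelianEq (u v : List ℤ) : Prop :=
  u.count 0 = v.count 0 ∧ u.count 1 = v.count 1

/-- The Sturmian word of slope `α` and intercept `x` begins with an abelian power of
period `m` and exponent `n`: its first `n` blocks of length `m` are pairwise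
abelian equivalent. -/
noncomputable def BeginsWithAbelianPower (α x : ℝ) (m n : ℕ) : Prop :=
  ∀ i < n, ∀ j < n, AbelianEq (sturmianBlock α x m i) (sturmianBlock α x m j)

lemma count_one_eq_sum (u : List ℤ) (h : ∀ a ∈ u, a = 0 ∨ a = 1) :
    (u.count 1 : ℤ) = u.sum := by
  induction u with
  | nil => simp
  | cons a t ih =>
    have ht := ih (fun b hb => h b (List.mem_cons_of_mem _ hb))
    rcases h a (List.mem_cons_self) with rfl | rfl <;>
      simp [List.count_cons, ht] <;> push_cast <;> ring

lemma count_zero_add_count_one (u : List ℤ) (h : ∀ a ∈ u, a = 0 ∨ a = 1) :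
    u.count 0 + u.count 1 = u.length := by
  induction u with
  | nil => simp
  | cons a t ih =>
    have ht := ih (fun b hb => h b (List.mem_cons_of_mem _ hb))
    rcases h a (List.mem_cons_self) with rfl | rfl <;>
      simp [List.count_cons] <;> omega

lemma letter_mem (α x : ℝ) (hmem : α ∈ Set.Ioo (0:ℝ) 1) (n : ℕ) :
    sturmianLetter α x n = 0 ∨ sturmianLetter α x n = 1 := by
  unfold sturmianLetter
  have h1 : ⌊(n : ℝ) * α + x⌋ ≤ ⌊((n : ℝ) + 1) * α + x⌋ := by
    apply Int.floor_le_floor; nlinarith [hmem.1]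
  have h2 : ⌊((n : ℝ) + 1) * α + x⌋ ≤ ⌊(n : ℝ) * α + x⌋ + 1 := by
    have : ((n : ℝ) + 1) * α + x ≤ ((n : ℝ) * α + x) + 1 := by nlinarith [hmem.2]
    calc ⌊((n : ℝ) + 1) * α + x⌋ ≤ ⌊((n : ℝ) * α + x) + 1⌋ := Int.floor_le_floor this
      _ = ⌊(n : ℝ) * α + x⌋ + 1 := by rw [Int.floor_add_one]
  omega

lemma sum_letters (α x : ℝ) (k m : ℕ) :
    ((List.range m).map (fun i => sturmianLetter α x (k + i))).sum
      = ⌊((k + m : ℕ) : ℝ) * α + x⌋ - ⌊((k : ℕ) : ℝ) * α + x⌋ := by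
  induction m with
  | zero => simp
  | succ m ih =>
    rw [List.range_succ, List.map_append, List.sum_append, ih]
    have : sturmianLetter α x (k + m)
        = ⌊((k + (m+1) : ℕ) : ℝ) * α + x⌋ - ⌊((k + m : ℕ) : ℝ) * α + x⌋ := by
      unfold sturmianLetter
      congr 2 <;> push_cast <;> ring
    simp only [List.map_cons, List.map_nil, List.sum_cons, List.sum_nil, this]
    ring

lemma block_sum (α x : ℝ) (m j : ℕ) :
    (sturmianBlock α x m j).sum
      = ⌊(m : ℝ) * α + ((j : ℝ) * m * α + x)⌋ - ⌊(j : ℝ) * m * α + x⌋ := by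
  unfold sturmianBlock
  rw [sum_letters]
  congr 2 <;> push_cast <;> ring

lemma floor_add_fract_eq (β t : ℝ) (hβ : Irrational β) (ht0 : 0 ≤ t) (ht1 : t < 1) :
    ⌊β + t⌋ = if t < Int.fract (-β) then ⌊β⌋ else ⌊β⌋ + 1 := by
  have hfr : Int.fract β ≠ 0 := by
    intro h
    have : β = (⌊β⌋ : ℝ) := by
      have := Int.fract_add_floor β
      rw [h] at this; linarith
    exact hβ ⟨(⌊β⌋ : ℚ), by push_cast; rw [← this]⟩
  have hneg : Int.fract (-β) = 1 - Int.fract β := Int.fract_neg hfr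
  have hb : β = (⌊β⌋ : ℝ) + Int.fract β := by
    have := Int.fract_add_floor β; linarith
  have key : ⌊β + t⌋ = ⌊β⌋ + ⌊Int.fract β + t⌋ := by
    conv_lhs => rw [hb]
    rw [add_assoc, add_comm ((⌊β⌋ : ℝ)), Int.floor_add_intCast]
    ring
  rw [key]
  have hf0 : 0 ≤ Int.fract β := Int.fract_nonneg β
  have hf1 : Int.fract β < 1 := Int.fract_lt_one β
  by_cases hc : t < Int.fract (-β)
  · rw [if_pos hc]
    have : ⌊Int.fract β + t⌋ = 0 := by
      apply Int.floor_eq_zero_iff.2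
      constructor
      · linarith
      · rw [hneg] at hc; linarith
    omega
  · rw [if_neg hc]
    push_neg at hc
    rw [hneg] at hc
    have : ⌊Int.fract β + t⌋ = 1 := by
      have h1 : (1 : ℝ) ≤ Int.fract β + t := by linarith
      have h2 : Int.fract β + t < 2 := by linarith
      rw [Int.floor_eq_iff]
      constructor <;> push_cast <;> linarith
    omega

theorem begins_with_abelian_power_iff (α : ℝ) (hα : Irrational α)
    (hmem : α ∈ Set.Ioo (0:ℝ) 1) (m n : ℕ) (hm : 1 ≤ m) (hn : 2 ≤ n) (x : ℝ) :
    BeginsWithAbelianPower α x m n ↔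
      ((∀ j < n, Int.fract (x + (j : ℝ) * m * α) < Int.fract (-(m : ℝ) * α)) ∨
        (∀ j < n, Int.fract (-(m : ℝ) * α) ≤ Int.fract (x + (j : ℝ) * m * α))) := by
  have hβ : Irrational ((m : ℝ) * α) := hα.natCast_mul (by omega)
  set c := Int.fract (-(m : ℝ) * α) with hc
  have hcneg : ∀ j : ℕ, Int.fract (-((m : ℝ) * α)) = c := by
    intro _; rw [hc]; ring_nf
  -- sum of each block via the fractional part criterion
  have keysum : ∀ j : ℕ, (sturmianBlock α x m j).sum =
      if Int.fract (x + (j : ℝ) * m * α) < c then ⌊(m : ℝ) * α⌋ else ⌊(m : ℝ) * α⌋ + 1 := by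
    intro j
    rw [block_sum]
    set y := (j : ℝ) * m * α + x with hy
    have hy' : x + (j : ℝ) * m * α = y := by rw [hy]; ring
    have hsplit : (m : ℝ) * α + y = (m : ℝ) * α + Int.fract y + (⌊y⌋ : ℤ) := by
      push_cast
      have := Int.fract_add_floor y
      linarith
    rw [hsplit, Int.floor_add_intCast,
      floor_add_fract_eq ((m : ℝ) * α) (Int.fract y) hβ (Int.fract_nonneg y)
        (Int.fract_lt_one y), hy']
    have : Int.fract (-((m : ℝ) * α)) = c := hcneg j
    rw [this]
    split <;> ring
  -- abelian equivalence of blocks iff equal sums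
  have hmemblk : ∀ j, ∀ a ∈ sturmianBlock α x m j, a = 0 ∨ a = 1 := by
    intro j a ha
    simp only [sturmianBlock, List.mem_map, List.mem_range] at ha
    obtain ⟨i, _, rfl⟩ := ha
    exact letter_mem α x hmem _
  have hlen : ∀ j, (sturmianBlock α x m j).length = m := by
    intro j; simp [sturmianBlock]
  have habel : ∀ i j, (AbelianEq (sturmianBlock α x m i) (sturmianBlock α x m j) ↔
      (sturmianBlock α x m i).sum = (sturmianBlock α x m j).sum) := by
    intro i j
    constructor
    · rintro ⟨_, h1⟩
      rw [← count_one_eq_sum _ (hmemblk i), ← count_one_eq_sum _ (hmemblk j), h1]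
    · intro hs
      have h1 : (sturmianBlock α x m i).count 1 = (sturmianBlock α x m j).count 1 := by
        have hi := count_one_eq_sum _ (hmemblk i)
        have hj := count_one_eq_sum _ (hmemblk j)
        have : ((sturmianBlock α x m i).count 1 : ℤ)
            = ((sturmianBlock α x m j).count 1 : ℤ) := by rw [hi, hj, hs]
        exact_mod_cast this
      refine ⟨?_, h1⟩
      have hi := count_zero_add_count_one _ (hmemblk i)
      have hj := count_zero_add_count_one _ (hmemblk j)
      rw [hlen i] at hi; rw [hlen j] at hj; omega
  constructor
  · intro hBW
    by_cases h0 : Int.fract (x + ((0 : ℕ) : ℝ) * m * α) < c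
    · left
      intro j hj
      have hab := (habel 0 j).1 (hBW 0 (by omega) j hj)
      rw [keysum 0, keysum j, if_pos h0] at hab
      by_contra hcon
      rw [if_neg hcon] at hab
      omega
    · right
      intro j hj
      have hab := (habel 0 j).1 (hBW 0 (by omega) j hj)
      rw [keysum 0, keysum j, if_neg h0] at hab
      by_contra hcon
      push_neg at hcon
      rw [if_pos hcon] at hab
      omega
  · intro hRHS i hi j hj
    rw [habel, keysum i, keysum j]
    rcases hRHS with h | h
    · rw [if_pos (h i hi), if_pos (h j hj)]
    · rw [if_neg (not_lt.2 (h i hi)), if_neg (not_lt.2 (h j hj))]
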